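/- If G is a permutation group on n letters and the total number of set-orbits s(G) = n + r with r even, then n is even. -/
import Mathlib


open Pointwise

/-- The number of orbits of `G ≤ Sₙ` on the powerset of `{1,...,n}`. -/
noncomputable def setOrbitCount (n : ℕ) (G : Subgroup (Equiv.Perm (Fin n))) : ℕ :=
  Nat.card (Quotient (MulAction.orbitRel G (Finset (Fin n))))

/-- The common cardinality of the sets in an orbit. -/
noncomputable def orbitCard (n : ℕ) (G : Subgroup (Equiv.Perm (Fin n))) :
    Quotient (MulAction.orbitRel G (Finset (Fin n))) → ℕ :=
  Quotient.lift Finset.card (by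
    rintro X Y ⟨g, rfl⟩
    exact Finset.card_smul_finset g Y)

/-- `s_t(G)`: the number of orbits of `G` on the `t`-element subsets of `{1,...,n}`. -/
noncomputable def tSetOrbitCount (n : ℕ) (G : Subgroup (Equiv.Perm (Fin n))) (t : ℕ) : ℕ :=
  Nat.card {q : Quotient (MulAction.orbitRel G (Finset (Fin n))) // orbitCard n G q = t}

/-- A fixed-point-free involution on a finite type forces even cardinality. -/
lemma even_card_of_involutive {α : Type*} [Finite α] (f : α → α)
    (hf : Function.Involutive f) (hfix : ∀ x, f x ≠ x) : Even (Nat.card α) := by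
  cases nonempty_fintype α
  rw [Nat.card_eq_fintype_card]
  have h2 : ((Fintype.card α : ℕ) : ZMod 2) = 0 := by
    rw [Fintype.card_eq_sum_ones, Nat.cast_sum]
    exact Finset.sum_involution (fun a _ => f a)
      (fun a _ => by decide)
      (fun a _ _ => hfix a)
      (fun a _ => Finset.mem_univ _)
      (fun a _ => hf a)
  exact even_iff_two_dvd.mpr ((ZMod.natCast_eq_zero_iff _ 2).mp h2)

lemma smul_finset_compl (n : ℕ) (G : Subgroup (Equiv.Perm (Fin n))) (g : G)
    (X : Finset (Fin n)) : (g • X)ᶜ = g • Xᶜ := by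
  ext a
  simp [Finset.mem_inv_smul_finset_iff, ← Finset.inv_smul_mem_iff]

theorem stmt_1 (n r : ℕ) (G : Subgroup (Equiv.Perm (Fin n)))
    (hr : Even r) (h : setOrbitCount n G = n + r) : Even n := by
  classical
  set Q := Quotient (MulAction.orbitRel G (Finset (Fin n))) with hQ
  -- the complement map on orbits
  have compat : ∀ X Y : Finset (Fin n), MulAction.orbitRel G (Finset (Fin n)) X Y →
      MulAction.orbitRel G (Finset (Fin n)) Xᶜ Yᶜ := by
    rintro X Y ⟨g, rfl⟩
    exact ⟨g, (smul_finset_compl n G g Y).symm⟩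
  let c : Q → Q := Quotient.map (·ᶜ) compat
  have hc : Function.Involutive c := by
    intro q
    induction q using Quotient.inductionOn with
    | h X => show Quotient.mk _ _ = _; simp [c]
  by_cases hfix : ∃ q, c q = q
  · -- a self-complementary orbit: n = 2 * |X|
    obtain ⟨q, hq⟩ := hfix
    induction q using Quotient.inductionOn with
    | h X =>
      have : MulAction.orbitRel G (Finset (Fin n)) Xᶜ X := Quotient.exact hq
      obtain ⟨g, hg⟩ := this
      have hcard : Xᶜ.card = X.card := by
        rw [← hg]; exact Finset.card_smul_finset g X
      have := Finset.card_add_card_compl X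
      rw [hcard, Fintype.card_fin] at this
      exact ⟨X.card, this.symm⟩
  · push_neg at hfix
    have : Even (Nat.card Q) := even_card_of_involutive c hc hfix
    rw [show Nat.card Q = setOrbitCount n G from rfl, h, Nat.even_add] at this
    exact this.mpr hr
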